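/- Let E be a non-Archimedean local field with uniformizer ϖ_E, let v, c ∈ O_E^×, and set β_v = [[0, (vϖ_E)^{-1}],[1, 0]] and M(h) = [[0, 1],[h^{-1}, −h^{-1}·c·ϖ_E^{-1}]] for h ∈ E^×. Then for h ∈ E^× and k ∈ ℤ, the matrix M(h) belongs to the set N(2,E)·β_v^k·O_E^×·U¹ if and only if k = −2 and h ∈ −c²·ϖ_E^{-2}·(1+P_E). -/

import Mathlib

/-- The value group `ℤₘ₀ = ℤ ∪ {0}` of a normalized discrete valuation. -/
abbrev Zm0 : Type := WithZero (Multiplicative ℤ)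

/-- The element of `ℤₘ₀` corresponding to `n : ℤ`; an element `x` with
`Valued.v x = zofZ (-n)` has normalized additive valuation `val_E x = n`. -/
abbrev zofZ (n : ℤ) : Zm0 := ((Multiplicative.ofAdd n : Multiplicative ℤ) : Zm0)

/-- For `a = v·ϖ ≠ 0`, the matrix `β_v = [[0, a⁻¹], [1, 0]]` as an invertible
element of the ring of `2×2` matrices over `E` (i.e. an element of `GL(2,E)`),
so that integer powers `β_v^k` make sense. -/
def betaUnit {E : Type} [Field E] (a : E) (ha : a ≠ 0) : (Matrix (Fin 2) (Fin 2) E)ˣ :=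
  ⟨!![0, a⁻¹; 1, 0], !![0, 1; a, 0],
   by simp [Matrix.mul_fin_two, Matrix.one_fin_two, inv_mul_cancel₀ ha],
   by simp [Matrix.mul_fin_two, Matrix.one_fin_two, mul_inv_cancel₀ ha]⟩

lemma zofZ_mul (m n : ℤ) : zofZ m * zofZ n = zofZ (m + n) := by
  simp [zofZ, ← WithZero.coe_mul, ← ofAdd_add]

lemma zofZ_inv (n : ℤ) : (zofZ n)⁻¹ = zofZ (-n) := by
  simp [zofZ, ← WithZero.coe_inv]

lemma zofZ_zero : zofZ 0 = 1 := rfl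

lemma zofZ_lt_iff {m n : ℤ} : zofZ m < zofZ n ↔ m < n := by
  simp [zofZ, WithZero.coe_lt_coe, Multiplicative.ofAdd_lt]

lemma zofZ_inj {m n : ℤ} (h : zofZ m = zofZ n) : m = n := by
  have := WithZero.coe_inj.mp h
  exact Multiplicative.ofAdd.injective this

lemma zofZ_zpow (m n : ℤ) : (zofZ m) ^ n = zofZ (m * n) := by
  rw [← WithZero.coe_zpow]
  congr 1
  rw [← ofAdd_zsmul]
  simp [mul_comm]

lemma zofZ_ne_zero (n : ℤ) : zofZ n ≠ 0 := WithZero.coe_ne_zero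

lemma betaUnit_sq {E : Type} [Field E] (a : E) (ha : a ≠ 0) :
    betaUnit a ha ^ 2 =
      (Units.map (algebraMap E (Matrix (Fin 2) (Fin 2) E)).toMonoidHom)
        (Units.mk0 a ha)⁻¹ := by
  ext : 1
  show ((betaUnit a ha : Matrix (Fin 2) (Fin 2) E) ^ 2) = _
  rw [sq]
  show (!![(0:E), a⁻¹; 1, 0] * !![0, a⁻¹; 1, 0]) = _
  rw [Units.coe_map]
  show _ = algebraMap E (Matrix (Fin 2) (Fin 2) E) a⁻¹
  rw [Algebra.algebraMap_eq_smul_one]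
  simp [Matrix.mul_fin_two, Matrix.one_fin_two, Matrix.smul_of]

lemma betaUnit_zpow_even {E : Type} [Field E] (a : E) (ha : a ≠ 0) (m : ℤ) :
    ((betaUnit a ha ^ (2 * m) : (Matrix (Fin 2) (Fin 2) E)ˣ) : Matrix (Fin 2) (Fin 2) E)
      = (a ^ m)⁻¹ • 1 := by
  rw [zpow_mul, show ((2:ℤ) = (2:ℕ)) from rfl, zpow_natCast, betaUnit_sq, ← MonoidHom.map_zpow]
  rw [Units.coe_map]
  show algebraMap E (Matrix (Fin 2) (Fin 2) E) (((Units.mk0 a ha)⁻¹ ^ m : Eˣ) : E) = _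
  rw [Algebra.algebraMap_eq_smul_one]
  congr 1
  rw [Units.val_zpow_eq_zpow_val]
  simp

lemma betaUnit_zpow_odd {E : Type} [Field E] (a : E) (ha : a ≠ 0) (m : ℤ) :
    ((betaUnit a ha ^ (2 * m + 1) : (Matrix (Fin 2) (Fin 2) E)ˣ) : Matrix (Fin 2) (Fin 2) E)
      = (a ^ m)⁻¹ • !![0, a⁻¹; 1, 0] := by
  rw [zpow_add, zpow_one, Units.val_mul, betaUnit_zpow_even, smul_mul_assoc, one_mul]
  rfl

set_option maxHeartbeats 1000000 in
/-- Let `E` be a non-Archimedean local field with uniformizer `ϖ`, let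
`v, c ∈ O_E^×`, `β_v = [[0,(vϖ)⁻¹],[1,0]]`, and `M(h) = [[0,1],[h⁻¹, −h⁻¹·c·ϖ⁻¹]]`
for `h ∈ E^×`.  Then for `h ∈ E^×` and `k ∈ ℤ`, one has
`M(h) ∈ N(2,E)·β_v^k·O_E^×·U¹` if and only if `k = −2` and
`h ∈ −c²·ϖ⁻²·(1+P_E)`. -/
theorem statement8
    (E : Type) [Field E] [Valued E Zm0] [CompleteSpace E]
    (hsurj : Function.Surjective (Valued.v : E → Zm0))
    (hfin : Finite (IsLocalRing.ResidueField ((Valued.v : Valuation E Zm0).valuationSubring)))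
    (ϖ v c : E)
    (hϖ : Valued.v ϖ = zofZ (-1))
    (hv : Valued.v v = (1 : Zm0))
    (hc : Valued.v c = (1 : Zm0))
    (h : E) (hh : h ≠ 0) (k : ℤ) :
    (∃ t x : E, ∃ z : Matrix (Fin 2) (Fin 2) E,
        Valued.v x = (1 : Zm0) ∧
        Valued.v (z 0 0 - 1) < (1 : Zm0) ∧
        Valued.v (z 1 0) < (1 : Zm0) ∧
        Valued.v (z 1 1 - 1) < (1 : Zm0) ∧
        Valued.v (z 0 1) ≤ (1 : Zm0) ∧
        !![(0 : E), 1; h⁻¹, -h⁻¹ * c * ϖ⁻¹]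
          = !![(1 : E), t; 0, 1]
            * ((betaUnit (v * ϖ)
                  (mul_ne_zero (fun h0 => by simp [h0] at hv)
                    (fun h0 => by simp [h0] at hϖ)) ^ k : (Matrix (Fin 2) (Fin 2) E)ˣ)
                : Matrix (Fin 2) (Fin 2) E)
            * (x • (1 : Matrix (Fin 2) (Fin 2) E)) * z)
    ↔ (k = -2 ∧ ∃ p : E, Valued.v p < (1 : Zm0) ∧ h = -c ^ 2 * (ϖ ^ 2)⁻¹ * (1 + p)) := by
  have hϖ0 : ϖ ≠ 0 := fun h0 => by simp [h0] at hϖ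
  have hv0 : v ≠ 0 := fun h0 => by simp [h0] at hv
  have hc0 : c ≠ 0 := fun h0 => by simp [h0] at hc
  have ha : (v * ϖ) ≠ 0 := mul_ne_zero hv0 hϖ0
  have hva : Valued.v (v * ϖ) = zofZ (-1) := by rw [map_mul, hv, hϖ, one_mul]
  constructor
  · rintro ⟨t, x, z, hx, hz00, hz10, hz11, hz01, heq⟩
    have hx0 : x ≠ 0 := fun q => by simp [q] at hx
    have vz00 : Valued.v (z 0 0) = 1 := by
      have := Valued.v.map_one_add_of_lt hz00
      rwa [show (1:E) + (z 0 0 - 1) = z 0 0 by ring] at this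
    have vz11 : Valued.v (z 1 1) = 1 := by
      have := Valued.v.map_one_add_of_lt hz11
      rwa [show (1:E) + (z 1 1 - 1) = z 1 1 by ring] at this
    have hz11ne : z 1 1 ≠ 0 := fun q => by simp [q] at vz11
    rcases Int.even_or_odd' k with ⟨m, hk | hk⟩
    · -- k = 2 * m : the even case
      subst hk
      rw [betaUnit_zpow_even] at heq
      set s : E := ((v * ϖ) ^ m)⁻¹ * x with hs
      have hs0 : s ≠ 0 := mul_ne_zero (inv_ne_zero (zpow_ne_zero _ ha)) hx0
      have hvs : Valued.v s = zofZ m := by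
        rw [hs, map_mul, map_inv₀, map_zpow₀, hva, hx, zofZ_zpow, zofZ_inv, mul_one]
        norm_num
      have hrhs : !![(1:E), t; 0, 1] * (((v * ϖ) ^ m)⁻¹ • 1) * (x • 1) * z
          = !![s * (z 0 0 + t * z 1 0), s * (z 0 1 + t * z 1 1); s * z 1 0, s * z 1 1] := by
        ext i j
        fin_cases i <;> fin_cases j <;>
          simp [Matrix.mul_apply, Fin.sum_univ_two, hs] <;> (try exact Or.inl (mul_comm _ _)) <;> (try ring)
      rw [hrhs] at heq
      have e00 : (0:E) = s * (z 0 0 + t * z 1 0) := by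
        have := congrFun (congrFun heq 0) 0
        simpa only [Matrix.of_apply, Matrix.cons_val', Matrix.cons_val_zero, Matrix.empty_val',
          Matrix.cons_val_fin_one, Matrix.cons_val_one, Matrix.head_cons,
          Matrix.head_fin_const] using this
      have e01 : (1:E) = s * (z 0 1 + t * z 1 1) := by
        have := congrFun (congrFun heq 0) 1
        simpa only [Matrix.of_apply, Matrix.cons_val', Matrix.cons_val_zero, Matrix.empty_val',
          Matrix.cons_val_fin_one, Matrix.cons_val_one, Matrix.head_cons,
          Matrix.head_fin_const] using this
      have e10 : h⁻¹ = s * z 1 0 := by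
        have := congrFun (congrFun heq 1) 0
        simpa only [Matrix.of_apply, Matrix.cons_val', Matrix.cons_val_zero, Matrix.empty_val',
          Matrix.cons_val_fin_one, Matrix.cons_val_one, Matrix.head_cons,
          Matrix.head_fin_const] using this
      have e11 : -h⁻¹ * c * ϖ⁻¹ = s * z 1 1 := by
        have := congrFun (congrFun heq 1) 1
        simpa only [Matrix.of_apply, Matrix.cons_val', Matrix.cons_val_zero, Matrix.empty_val',
          Matrix.cons_val_fin_one, Matrix.cons_val_one, Matrix.head_cons,
          Matrix.head_fin_const] using this
      have key : (1:E) = s * (z 0 1 + z 0 0 * c * ϖ⁻¹) := by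
        linear_combination e01 - t * e11 - t * c * ϖ⁻¹ * e10 + c * ϖ⁻¹ * e00
      have vsum : Valued.v (z 0 1 + z 0 0 * c * ϖ⁻¹) = zofZ 1 := by
        have hr : Valued.v (z 0 0 * c * ϖ⁻¹) = zofZ 1 := by
          rw [map_mul, map_mul, map_inv₀, vz00, hc, hϖ, zofZ_inv]; norm_num
        rw [Valued.v.map_add_eq_of_lt_right (by
          rw [hr]; exact lt_of_le_of_lt hz01 (by rw [← zofZ_zero, zofZ_lt_iff]; norm_num)), hr]
      have hm : m = -1 := by
        have h2 : (1 : Zm0) = Valued.v s * zofZ 1 := by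
          rw [← vsum, ← map_mul, ← key, map_one]
        rw [hvs, zofZ_mul, ← zofZ_zero] at h2
        have := zofZ_inj h2
        omega
      subst hm
      refine ⟨by norm_num, (z 0 0 + z 0 1 * ϖ * c⁻¹) * (z 1 1)⁻¹ - 1, ?_, ?_⟩
      · have hnum : Valued.v ((z 0 0 - 1) + (-(z 1 1 - 1)) + z 0 1 * ϖ * c⁻¹) < 1 := by
          apply Valued.v.map_add_lt
          · exact Valued.v.map_add_lt hz00 (by rwa [Valuation.map_neg])
          · rw [map_mul, map_mul, map_inv₀, hϖ, hc]
            calc Valued.v (z 0 1) * zofZ (-1) * 1⁻¹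
                ≤ 1 * zofZ (-1) * 1⁻¹ := by
                  exact mul_le_mul_left (mul_le_mul_left hz01 _) _
              _ < 1 := by
                  rw [inv_one, mul_one, one_mul, ← zofZ_zero, zofZ_lt_iff]; norm_num
        have e : (z 0 0 + z 0 1 * ϖ * c⁻¹) * (z 1 1)⁻¹ - 1
            = ((z 0 0 - 1) + (-(z 1 1 - 1)) + z 0 1 * ϖ * c⁻¹) * (z 1 1)⁻¹ := by
          field_simp
          ring
        rw [e, map_mul, map_inv₀, vz11]
        simpa using hnum
      · have E1 : s * z 1 1 * (h * ϖ) = -c := by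
          have e11' := e11
          field_simp at e11'
          linear_combination -e11'
        have E2 : s * (z 0 1 * ϖ + z 0 0 * c) = ϖ := by
          have key' := key
          field_simp at key'
          linear_combination -key'
        have E3 : z 1 1 * h * ϖ ^ 2 = -c * (z 0 1 * ϖ + z 0 0 * c) := by
          linear_combination (z 0 1 * ϖ + z 0 0 * c) * E1 - (z 1 1 * h * ϖ) * E2
        field_simp
        linear_combination E3
    · -- k = 2 * m + 1 : the odd case, impossible
      subst hk
      rw [betaUnit_zpow_odd] at heq
      set s : E := ((v * ϖ) ^ m)⁻¹ * x with hs
      have hrhs : !![(1:E), t; 0, 1] * (((v * ϖ) ^ m)⁻¹ • !![0, (v*ϖ)⁻¹; 1, 0]) * (x • 1) * z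
          = !![s * (t * z 0 0 + (v*ϖ)⁻¹ * z 1 0), s * (t * z 0 1 + (v*ϖ)⁻¹ * z 1 1);
              s * z 0 0, s * z 0 1] := by
        ext i j
        fin_cases i <;> fin_cases j <;>
          simp [Matrix.mul_apply, Fin.sum_univ_two, hs] <;> (try exact Or.inl (mul_comm _ _)) <;> (try ring)
      rw [hrhs] at heq
      have e10 : h⁻¹ = s * z 0 0 := by
        have := congrFun (congrFun heq 1) 0
        simpa only [Matrix.of_apply, Matrix.cons_val', Matrix.cons_val_zero, Matrix.empty_val',
          Matrix.cons_val_fin_one, Matrix.cons_val_one, Matrix.head_cons,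
          Matrix.head_fin_const] using this
      have e11 : -h⁻¹ * c * ϖ⁻¹ = s * z 0 1 := by
        have := congrFun (congrFun heq 1) 1
        simpa only [Matrix.of_apply, Matrix.cons_val', Matrix.cons_val_zero, Matrix.empty_val',
          Matrix.cons_val_fin_one, Matrix.cons_val_one, Matrix.head_cons,
          Matrix.head_fin_const] using this
      exfalso
      have hs0 : s ≠ 0 := fun q => by
        rw [q, zero_mul] at e10
        exact inv_ne_zero hh e10
      have hvs : Valued.v s ≠ 0 := by
        rw [hs, map_mul, map_inv₀, map_zpow₀, hva, hx, zofZ_zpow, zofZ_inv, mul_one]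
        exact zofZ_ne_zero _
      have hrel : s * z 0 1 = -(c * ϖ⁻¹ * (s * z 0 0)) := by
        rw [← e10, ← e11]; ring
      have hval2 : Valued.v s * Valued.v (z 0 1) = Valued.v s * zofZ 1 := by
        calc Valued.v s * Valued.v (z 0 1) = Valued.v (s * z 0 1) := (map_mul _ _ _).symm
          _ = Valued.v (c * ϖ⁻¹ * (s * z 0 0)) := by rw [hrel, Valuation.map_neg]
          _ = Valued.v s * zofZ 1 := by
              rw [map_mul, map_mul, map_inv₀, map_mul, hc, hϖ, vz00, zofZ_inv]
              simp [mul_comm]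
      have : Valued.v (z 0 1) = zofZ 1 := mul_left_cancel₀ hvs hval2
      rw [this] at hz01
      exact absurd hz01 (by rw [← zofZ_zero]; exact not_le.mpr (zofZ_lt_iff.mpr (by norm_num)))
  · rintro ⟨rfl, p, hp, hHeq⟩
    have hone : Valued.v ((1:E) + p) = 1 := Valued.v.map_one_add_of_lt hp
    have hp0 : (1:E) + p ≠ 0 := fun q => by simp [q] at hone
    have hvh : Valued.v h = zofZ 2 := by
      rw [hHeq, map_mul, map_mul, Valuation.map_neg, map_pow, map_inv₀, map_pow, hc, hϖ, hone,
        sq, sq, zofZ_mul, zofZ_inv]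
      norm_num
    have hz11 : -h⁻¹ * c ^ 2 * (ϖ ^ 2)⁻¹ = ((1:E) + p)⁻¹ := by
      rw [hHeq]; field_simp
    refine ⟨-h * ϖ * c⁻¹, (v * c)⁻¹, !![1, 0; h⁻¹ * c * ϖ⁻¹, -h⁻¹ * c ^ 2 * (ϖ ^ 2)⁻¹],
      ?_, ?_, ?_, ?_, ?_, ?_⟩
    · rw [map_inv₀, map_mul, hv, hc]; simp
    · simp
    · show Valued.v (h⁻¹ * c * ϖ⁻¹) < 1
      rw [map_mul, map_mul, map_inv₀, map_inv₀, hvh, hc, hϖ, zofZ_inv, zofZ_inv, mul_one,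
        zofZ_mul, ← zofZ_zero, zofZ_lt_iff]
      norm_num
    · show Valued.v (-h⁻¹ * c ^ 2 * (ϖ ^ 2)⁻¹ - 1) < 1
      rw [hz11]
      have e : ((1:E) + p)⁻¹ - 1 = -p * ((1:E)+p)⁻¹ := by field_simp; ring
      rw [e, map_mul, Valuation.map_neg, map_inv₀, hone]
      simpa using hp
    · show Valued.v (0:E) ≤ 1
      simp
    · have hbeta : ((betaUnit (v * ϖ)
            (mul_ne_zero (fun h0 => by simp [h0] at hv)
              (fun h0 => by simp [h0] at hϖ)) ^ (-2 : ℤ) : (Matrix (Fin 2) (Fin 2) E)ˣ)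
              : Matrix (Fin 2) (Fin 2) E) = (v * ϖ) • 1 := by
        rw [show (-2 : ℤ) = 2 * (-1) from rfl, betaUnit_zpow_even]
        simp
      rw [hbeta]
      ext i j
      fin_cases i <;> fin_cases j <;>
        simp [Matrix.mul_apply, Fin.sum_univ_two] <;>
        field_simp <;> ring
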